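/- arXiv:quant-ph/0309120 — 2 statements merged into one kernel-verified Lean document; each statement's English description precedes it below -/
import Mathlib

section
/- Let F_q have odd characteristic p and let v_{a,b} = q^{-1/2}(ω_p^{tr(a x² + b x)})_{x ∈ F_q}. If a ≠ c in F_q, then for all b, d ∈ F_q one has |⟨v_{a,b}, v_{c,d}⟩|² = 1/q; that is, the bases B_a and B_c are mutually unbiased. -/
open scoped InnerProductSpace

/-- The vector `v_{a,b} = q^{-1/2} (ω_p^{tr(a x² + b x)})_{x ∈ F_q}` of `ℂ^q`,
where `ω_p = exp(2πi/p)` and `tr` is the absolute trace from `F_q` to `F_p`. -/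
noncomputable def v (p : ℕ) (F : Type) [Field F] [Fintype F] [Algebra (ZMod p) F]
    (a b : F) : EuclideanSpace ℂ F :=
  WithLp.toLp 2 (fun x => (1 / Real.sqrt (Fintype.card F) : ℂ) *
    Complex.exp (2 * Real.pi * Complex.I *
      (ZMod.val (Algebra.trace (ZMod p) F (a * x ^ 2 + b * x)) : ℂ) / p))

/-- If `a ≠ c`, then `|⟨v_{a,b}, v_{c,d}⟩|² = 1/q` for all `b, d ∈ F_q`:
the bases `B_a` and `B_c` are mutually unbiased (odd characteristic `p`). -/
theorem Ba_Bc_mutually_unbiased (p : ℕ) [Fact p.Prime] (hp : Odd p)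
    (F : Type) [Field F] [Fintype F] [Algebra (ZMod p) F]
    (a c : F) (hac : a ≠ c) (b d : F) :
    ‖⟪v p F a b, v p F c d⟫_ℂ‖ ^ 2 = 1 / Fintype.card F := by
  classical
  have hpP : p.Prime := Fact.out
  have hp0 : p ≠ 0 := hpP.ne_zero
  haveI : NeZero p := ⟨hp0⟩
  haveI : CharP F p := charP_of_injective_ringHom (algebraMap (ZMod p) F).injective p
  set q : ℕ := Fintype.card F with hq
  have hq0 : 0 < q := Fintype.card_pos
  have hqR : (0:ℝ) < q := by exact_mod_cast hq0
  have hqC : (q:ℂ) ≠ 0 := by exact_mod_cast hq0.ne'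
  -- the additive character
  have hroot : IsPrimitiveRoot (Complex.exp (2 * Real.pi * Complex.I / p)) p :=
    Complex.isPrimitiveRoot_exp p hp0
  set ζ : ℂ := Complex.exp (2 * Real.pi * Complex.I / p) with hζdef
  have hζ : ζ ^ p = 1 := hroot.pow_eq_one
  set ψ₀ : AddChar (ZMod p) ℂ := AddChar.zmodChar p hζ with hψ₀def
  have hψ₀prim : ψ₀.IsPrimitive := by
    have := AddChar.zmodChar_primitive_of_primitive_root p hroot
    convert this using 2
  set ψ : AddChar F ℂ :=
    ψ₀.compAddMonoidHom (Algebra.trace (ZMod p) F).toAddMonoidHom with hψdef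
  have hψapp : ∀ t : F, ψ t = ζ ^ (Algebra.trace (ZMod p) F t).val := fun t => rfl
  have hψne : ψ ≠ 1 := by
    obtain ⟨z, hz⟩ : ∃ z, Algebra.trace (ZMod p) F (1 * z) ≠ 0 := by
      have htr := (traceForm_nondegenerate (ZMod p) F).1 1
      simp_rw [Algebra.traceForm_apply] at htr
      by_contra! hf
      exact one_ne_zero (htr hf)
    rw [one_mul] at hz
    refine AddChar.ne_one_iff.2 ⟨z, fun hf => hz ?_⟩
    exact (hψ₀prim.zmod_char_eq_one_iff p _).mp hf
  have hψprim : ψ.IsPrimitive := AddChar.IsPrimitive.of_ne_one hψne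
  -- exponential expression equals ψ
  have hv : ∀ t : F, Complex.exp (2 * Real.pi * Complex.I *
      ((ZMod.val (Algebra.trace (ZMod p) F t)) : ℂ) / p) = ψ t := by
    intro t
    rw [hψapp, hζdef, ← Complex.exp_nat_mul]
    congr 1
    ring
  -- conjugation
  have hζconj : (starRingEnd ℂ) ζ = ζ⁻¹ := by
    rw [hζdef, ← Complex.exp_conj, ← Complex.exp_neg]
    congr 1
    simp only [map_div₀, map_mul, Complex.conj_I, Complex.conj_ofReal, map_ofNat, map_natCast]
    ring
  have hconj : ∀ t : F, (starRingEnd ℂ) (ψ t) = ψ (-t) := by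
    intro t
    rw [AddChar.map_neg_eq_inv, hψapp, map_pow, hζconj, inv_pow]
  -- the inner product
  set S : ℂ := ∑ x : F, ψ ((c - a) * x ^ 2 + (d - b) * x) with hSdef
  have hsq : (1 / (Real.sqrt q : ℂ)) * (1 / (Real.sqrt q : ℂ)) = 1 / (q : ℂ) := by
    rw [div_mul_div_comm, one_mul, ← Complex.ofReal_mul,
      Real.mul_self_sqrt (le_of_lt hqR), Complex.ofReal_natCast]
  have key : ⟪v p F a b, v p F c d⟫_ℂ = (1 / (q : ℂ)) * S := by
    rw [PiLp.inner_apply, hSdef, Finset.mul_sum]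
    refine Finset.sum_congr rfl fun x _ => ?_
    simp only [v, RCLike.inner_apply, map_mul, hv]
    rw [hconj]
    have h1 : (starRingEnd ℂ) (1 / (Real.sqrt q : ℂ)) = 1 / (Real.sqrt q : ℂ) := by
      rw [map_div₀, map_one, Complex.conj_ofReal]
    rw [h1]
    have h2 : ψ (-(a * x ^ 2 + b * x)) * ψ (c * x ^ 2 + d * x)
        = ψ ((c - a) * x ^ 2 + (d - b) * x) := by
      rw [← AddChar.map_add_eq_mul]
      congr 1
      ring
    rw [mul_mul_mul_comm, hsq, mul_comm (ψ _), h2]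
  -- the Gauss sum computation
  have hα : c - a ≠ 0 := sub_ne_zero.mpr (Ne.symm hac)
  have h2F : (2 : F) ≠ 0 := by
    intro h
    have h2 : ((2 : ℕ) : F) = 0 := by exact_mod_cast h
    have hdvd := (CharP.cast_eq_zero_iff F p 2).mp h2
    have hpe := (Nat.prime_dvd_prime_iff_eq hpP Nat.prime_two).mp hdvd
    rw [hpe] at hp
    simp [Nat.odd_iff] at hp
  have hS : S * (starRingEnd ℂ) S = q := by
    rw [hSdef, map_sum]
    simp_rw [hconj]
    rw [Finset.sum_mul_sum]
    have hsplit : ∀ x : F, ∑ y : F,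
        ψ ((c - a) * x ^ 2 + (d - b) * x) * ψ (-((c - a) * y ^ 2 + (d - b) * y))
        = ∑ t : F, ψ (-((c - a) * t ^ 2 + (d - b) * t)) * ψ (x * (-(2 * (c - a) * t))) := by
      intro x
      rw [← Equiv.sum_comp (Equiv.addLeft x)]
      refine Finset.sum_congr rfl fun t _ => ?_
      rw [← AddChar.map_add_eq_mul, ← AddChar.map_add_eq_mul]
      congr 1
      simp only [Equiv.coe_addLeft]
      ring
    simp_rw [hsplit]
    rw [Finset.sum_comm]
    have hinner : ∀ t : F,
        ∑ x : F, ψ (-((c - a) * t ^ 2 + (d - b) * t)) * ψ (x * (-(2 * (c - a) * t)))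
        = ψ (-((c - a) * t ^ 2 + (d - b) * t)) *
            (if -(2 * (c - a) * t) = 0 then (q : ℂ) else 0) := by
      intro t
      rw [← Finset.mul_sum, AddChar.sum_mulShift _ hψprim]
      congr 1
      split <;> simp [hq]
    simp_rw [hinner]
    rw [Finset.sum_eq_single 0]
    · simp
    · intro t _ ht
      have : -(2 * (c - a) * t) ≠ 0 := by
        simp only [neg_ne_zero]
        exact mul_ne_zero (mul_ne_zero h2F hα) ht
      rw [if_neg this, mul_zero]
    · intro h
      exact absurd (Finset.mem_univ 0) h
  -- conclude
  have hfin : ⟪v p F a b, v p F c d⟫_ℂ * (starRingEnd ℂ) ⟪v p F a b, v p F c d⟫_ℂ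
      = ((1 / (q : ℝ) : ℝ) : ℂ) := by
    rw [key, map_mul]
    have : (starRingEnd ℂ) (1 / (q : ℂ)) = 1 / (q : ℂ) := by
      rw [map_div₀, map_one, map_natCast]
    rw [this]
    calc (1 / (q : ℂ)) * S * ((1 / (q : ℂ)) * (starRingEnd ℂ) S)
        = (1 / (q : ℂ)) * (1 / (q : ℂ)) * (S * (starRingEnd ℂ) S) := by ring
      _ = (1 / (q : ℂ)) * (1 / (q : ℂ)) * q := by rw [hS]
      _ = ((1 / (q : ℝ) : ℝ) : ℂ) := by
          push_cast
          field_simp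
  rw [Complex.mul_conj] at hfin
  have : Complex.normSq ⟪v p F a b, v p F c d⟫_ℂ = 1 / (q : ℝ) := by
    exact_mod_cast hfin
  rw [Complex.sq_norm, this]
end

section
/- Let N(d) denote the maximum number of pairwise mutually unbiased orthonormal bases of ℂ^d. Then N(nm) ≥ min{N(n), N(m)} for all integers n, m ≥ 2. -/
open scoped InnerProductSpace

/-- `B` is a family of `m` pairwise mutually unbiased orthonormal bases of
`ℂ^d`. -/
def IsMUBFamily (d m : ℕ) (B : Fin m → Fin d → EuclideanSpace ℂ (Fin d)) : Prop :=
  (∀ i, Orthonormal ℂ (B i) ∧ Submodule.span ℂ (Set.range (B i)) = ⊤) ∧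
  (∀ i j, i ≠ j → ∀ a b, ‖⟪B i a, B j b⟫_ℂ‖ ^ 2 = 1 / d)

/-- `N d` is the maximal number of pairwise mutually unbiased orthonormal bases
of `ℂ^d`. -/
noncomputable def N (d : ℕ) : ℕ :=
  sSup {m : ℕ | ∃ B : Fin m → Fin d → EuclideanSpace ℂ (Fin d), IsMUBFamily d m B}

/-- Tensor product of two vectors, realised in `ℂ^{nm}`. -/
def MUBvec {n m : ℕ} (u : EuclideanSpace ℂ (Fin n)) (v : EuclideanSpace ℂ (Fin m)) :
    EuclideanSpace ℂ (Fin (n * m)) :=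
  WithLp.toLp 2 (fun x => u (finProdFinEquiv.symm x).1 * v (finProdFinEquiv.symm x).2)

/-- Complex conjugate of a vector. -/
def MUBconj {d : ℕ} (u : EuclideanSpace ℂ (Fin d)) : EuclideanSpace ℂ (Fin d) :=
  WithLp.toLp 2 (fun a => (starRingEnd ℂ) (u a))

lemma inner_MUBvec {n m : ℕ} (u u' : EuclideanSpace ℂ (Fin n))
    (v v' : EuclideanSpace ℂ (Fin m)) :
    ⟪MUBvec u v, MUBvec u' v'⟫_ℂ = ⟪u, u'⟫_ℂ * ⟪v, v'⟫_ℂ := by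
  simp only [PiLp.inner_apply, RCLike.inner_apply, MUBvec, PiLp.toLp_apply]
  rw [Fintype.sum_equiv (finProdFinEquiv.symm : Fin (n * m) ≃ Fin n × Fin m) _
    (fun p => (u' p.1 * v' p.2) * (starRingEnd ℂ) (u p.1 * v p.2)) (fun x => rfl)]
  rw [Fintype.sum_prod_type, Finset.sum_mul_sum]
  apply Finset.sum_congr rfl
  intro a _
  apply Finset.sum_congr rfl
  intro b _
  simp only [map_mul]
  ring

lemma inner_MUBconj {d : ℕ} (u v : EuclideanSpace ℂ (Fin d)) :
    ⟪MUBconj u, MUBconj v⟫_ℂ = (starRingEnd ℂ) ⟪u, v⟫_ℂ := by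
  simp only [PiLp.inner_apply, RCLike.inner_apply, MUBconj, map_sum, map_mul,
    Complex.conj_conj, PiLp.toLp_apply]

/-- Upper bound on the size of a MUB family. -/
lemma mub_card_le (d k : ℕ) (hd : 2 ≤ d) (B : Fin k → Fin d → EuclideanSpace ℂ (Fin d))
    (hB : IsMUBFamily d k B) : k ≤ d * d := by
  haveI : NeZero d := ⟨by omega⟩
  classical
  set w : Fin k → EuclideanSpace ℂ (Fin d) := fun i => B i 0 with hw
  set P : Fin k → EuclideanSpace ℂ (Fin (d * d)) :=
    fun i => MUBvec (w i) (MUBconj (w i)) with hP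
  have hG : ∀ i j : Fin k, ⟪P i, P j⟫_ℂ = if i = j then 1 else ((1 : ℂ) / d) := by
    intro i j
    rw [hP]
    simp only
    rw [inner_MUBvec, inner_MUBconj, Complex.mul_conj, ← Complex.sq_norm]
    by_cases h : i = j
    · subst h
      have h1 := (orthonormal_iff_ite.mp (hB.1 i).1) 0 0
      simp only [if_pos rfl] at h1
      rw [if_pos rfl, hw]
      simp only
      rw [h1]
      simp
    · have h2 := hB.2 i j h 0 0
      rw [if_neg h, hw]
      simp only
      rw [h2]
      push_cast
      ring
  have hli : LinearIndependent ℂ P := by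
    rw [Fintype.linearIndependent_iff]
    intro c hc
    have h0 : (0 : ℂ) = ∑ i, ∑ j, (starRingEnd ℂ) (c i) * c j * ⟪P i, P j⟫_ℂ := by
      have h00 : ⟪∑ i, c i • P i, ∑ j, c j • P j⟫_ℂ = 0 := by rw [hc]; simp
      rw [← h00, sum_inner]
      apply Finset.sum_congr rfl
      intro i _
      rw [inner_sum]
      apply Finset.sum_congr rfl
      intro j _
      rw [inner_smul_left, inner_smul_right]
      ring
    have hterm : ∀ i j : Fin k, (starRingEnd ℂ) (c i) * c j * ⟪P i, P j⟫_ℂ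
        = ((1:ℂ)/d) * ((starRingEnd ℂ) (c i) * c j)
          + (if i = j then (1 - (1:ℂ)/d) * ((Complex.normSq (c j) : ℝ) : ℂ) else 0) := by
      intro i j
      rw [hG]
      by_cases h : i = j
      · subst h
        rw [if_pos rfl, if_pos rfl, mul_one, Complex.normSq_eq_conj_mul_self]
        ring
      · rw [if_neg h, if_neg h]
        ring
    have h1 : ∑ i, ∑ j, ((1:ℂ)/d) * ((starRingEnd ℂ) (c i) * c j)
        = ((1:ℂ)/d) * ((Complex.normSq (∑ i, c i) : ℝ) : ℂ) := by
      rw [Complex.normSq_eq_conj_mul_self, map_sum, Finset.sum_mul_sum]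
      rw [Finset.mul_sum]
      apply Finset.sum_congr rfl
      intro i _
      rw [Finset.mul_sum]
    have h2 : ∑ i : Fin k, ∑ j : Fin k,
        (if i = j then (1 - (1:ℂ)/d) * ((Complex.normSq (c j) : ℝ) : ℂ) else 0)
        = (1 - (1:ℂ)/d) * ((∑ i, Complex.normSq (c i) : ℝ) : ℂ) := by
      simp only [Finset.sum_ite_eq, Finset.mem_univ, if_true]
      push_cast
      rw [Finset.mul_sum]
    have hsplit : (0 : ℂ) = ((1:ℂ)/d) * ((Complex.normSq (∑ i, c i) : ℝ) : ℂ)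
        + (1 - (1:ℂ)/d) * ((∑ i, Complex.normSq (c i) : ℝ) : ℂ) := by
      rw [h0]
      simp only [hterm, Finset.sum_add_distrib]
      rw [h1, h2]
    -- convert to a real equation
    set Q : ℝ := Complex.normSq (∑ i, c i) with hQ
    set T : ℝ := ∑ i, Complex.normSq (c i) with hT
    have hreal : (0 : ℝ) = (1/(d:ℝ)) * Q + (1 - 1/(d:ℝ)) * T := by
      have : (((1/(d:ℝ)) * Q + (1 - 1/(d:ℝ)) * T : ℝ) : ℂ) = 0 := by
        push_cast
        rw [← hsplit]
      exact_mod_cast this.symm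
    have hd1 : (0:ℝ) < 1 - 1/(d:ℝ) := by
      have hd2 : (2:ℝ) ≤ d := by exact_mod_cast hd
      have hdpos : (0:ℝ) < d := by linarith
      rw [sub_pos, div_lt_one hdpos]; linarith
    have hQ0 : 0 ≤ Q := Complex.normSq_nonneg _
    have hT0 : 0 ≤ T := Finset.sum_nonneg fun i _ => Complex.normSq_nonneg _
    have hsum0 : T = 0 := by
      by_contra h
      have hTpos : 0 < T := lt_of_le_of_ne hT0 (Ne.symm h)
      have h3 : 0 < (1 - 1/(d:ℝ)) * T := mul_pos hd1 hTpos
      have h4 : 0 ≤ (1/(d:ℝ)) * Q := by positivity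
      linarith
    intro i
    have hi : Complex.normSq (c i) = 0 :=
      (Finset.sum_eq_zero_iff_of_nonneg
        (fun i _ => Complex.normSq_nonneg (c i))).mp hsum0 i (Finset.mem_univ i)
    exact Complex.normSq_eq_zero.mp hi
  have hcard := hli.fintype_card_le_finrank
  simpa [finrank_euclideanSpace] using hcard

lemma mub_bddAbove (d : ℕ) (hd : 2 ≤ d) :
    BddAbove {m : ℕ | ∃ B : Fin m → Fin d → EuclideanSpace ℂ (Fin d), IsMUBFamily d m B} :=
  ⟨d * d, fun k hk => by obtain ⟨B, hB⟩ := hk; exact mub_card_le d k hd B hB⟩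

lemma mub_zero_mem (d : ℕ) :
    (0 : ℕ) ∈ {m : ℕ | ∃ B : Fin m → Fin d → EuclideanSpace ℂ (Fin d), IsMUBFamily d m B} :=
  ⟨fun i => i.elim0, ⟨fun i => i.elim0, fun i => i.elim0⟩⟩

lemma mub_restrict (d K k : ℕ) (h : k ≤ K) (B : Fin K → Fin d → EuclideanSpace ℂ (Fin d))
    (hB : IsMUBFamily d K B) : IsMUBFamily d k (fun i => B (Fin.castLE h i)) := by
  refine ⟨fun i => hB.1 _, fun i j hij a b => hB.2 _ _ (fun he => hij ?_) a b⟩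
  exact Fin.castLE_injective h he

/-- The tensor construction. -/
lemma mub_tensor (n m k : ℕ) (hn : 2 ≤ n) (hm : 2 ≤ m)
    (B : Fin k → Fin n → EuclideanSpace ℂ (Fin n))
    (C : Fin k → Fin m → EuclideanSpace ℂ (Fin m))
    (hB : IsMUBFamily n k B) (hC : IsMUBFamily m k C) :
    ∃ D : Fin k → Fin (n * m) → EuclideanSpace ℂ (Fin (n * m)), IsMUBFamily (n * m) k D := by
  classical
  set e : Fin n × Fin m ≃ Fin (n * m) := finProdFinEquiv with he
  set D : Fin k → Fin (n * m) → EuclideanSpace ℂ (Fin (n * m)) :=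
    fun i c => MUBvec (B i (e.symm c).1) (C i (e.symm c).2) with hD
  have key : ∀ (i j : Fin k) (c c' : Fin (n * m)),
      ⟪D i c, D j c'⟫_ℂ
        = ⟪B i (e.symm c).1, B j (e.symm c').1⟫_ℂ * ⟪C i (e.symm c).2, C j (e.symm c').2⟫_ℂ := by
    intro i j c c'
    rw [hD]
    simp only
    rw [inner_MUBvec]
  have hon : ∀ i, Orthonormal ℂ (D i) := by
    intro i
    rw [orthonormal_iff_ite]
    intro c c'
    rw [key, orthonormal_iff_ite.mp (hB.1 i).1, orthonormal_iff_ite.mp (hC.1 i).1]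
    by_cases h : c = c'
    · subst h; simp
    · have hne : (e.symm c).1 ≠ (e.symm c').1 ∨ (e.symm c).2 ≠ (e.symm c').2 := by
        by_contra hcon
        push_neg at hcon
        exact h (e.symm.injective (Prod.ext hcon.1 hcon.2))
      rcases hne with hne | hne
      · rw [if_neg hne, if_neg h, zero_mul]
      · rw [if_neg hne, if_neg h, mul_zero]
  refine ⟨D, fun i => ⟨hon i, ?_⟩, ?_⟩
  · haveI : Nonempty (Fin (n * m)) := ⟨⟨0, Nat.mul_pos (by omega) (by omega)⟩⟩
    exact (hon i).linearIndependent.span_eq_top_of_card_eq_finrank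
      (by simp [finrank_euclideanSpace])
  · intro i j hij c c'
    rw [key, norm_mul, mul_pow, hB.2 i j hij _ _, hC.2 i j hij _ _]
    have hn0 : (n:ℝ) ≠ 0 := by positivity
    have hm0 : (m:ℝ) ≠ 0 := by positivity
    push_cast
    rw [div_mul_div_comm]
    norm_num

/-- MacNeish-type bound: `N(nm) ≥ min{N(n), N(m)}` for all `n, m ≥ 2`. -/
theorem N_mul_ge_min (n m : ℕ) (hn : 2 ≤ n) (hm : 2 ≤ m) :
    min (N n) (N m) ≤ N (n * m) := by
  have hnmem : N n ∈ {k : ℕ | ∃ B : Fin k → Fin n → EuclideanSpace ℂ (Fin n),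
      IsMUBFamily n k B} :=
    Nat.sSup_mem ⟨0, mub_zero_mem n⟩ (mub_bddAbove n hn)
  have hmmem : N m ∈ {k : ℕ | ∃ B : Fin k → Fin m → EuclideanSpace ℂ (Fin m),
      IsMUBFamily m k B} :=
    Nat.sSup_mem ⟨0, mub_zero_mem m⟩ (mub_bddAbove m hm)
  obtain ⟨B, hB⟩ := hnmem
  obtain ⟨C, hC⟩ := hmmem
  set k := min (N n) (N m) with hk
  have hkn : k ≤ N n := min_le_left _ _
  have hkm : k ≤ N m := min_le_right _ _
  have hB' := mub_restrict n (N n) k hkn B hB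
  have hC' := mub_restrict m (N m) k hkm C hC
  obtain ⟨D, hD⟩ := mub_tensor n m k hn hm _ _ hB' hC'
  exact le_csSup (mub_bddAbove (n * m) (by nlinarith)) ⟨D, hD⟩
end
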